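/- (Proposition 2, simultaneous diagonalizability) Suppose P₁ = (U⊗V) Λ (U⊗V)^H with U, V unitary, Λ nonnegative block-diagonal. Consider any sequence of operations on P of two types: (i) measurement updates P ↦ P − P S_i (S_i^H P S_i + σ²I)^{-1} S_i^H P with S_i = √ρ(u_i ⊗ I_{N_r}) for some column u_i of U, and (ii) prediction updates P ↦ a² P + (1−a²) P₁. Then every matrix produced by any such sequence has the form (U⊗V) D (U⊗V)^H for some nonnegative diagonal matrix D; i.e., all iterates are simultaneously diagonalizable with P₁. -/

import Mathlib

open Matrix Kronecker

/-- The Kalman measurement update with pilot beam `√ρ (u_i ⊗ I_{N_r})`, where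
`u_i` is the `i`-th column of `U`. -/
noncomputable def measUpdate {Nt Nr : ℕ} (U : Matrix (Fin Nt) (Fin Nt) ℂ)
    (ρ σ2 : ℝ) (P : Matrix (Fin Nt × Fin Nr) (Fin Nt × Fin Nr) ℂ) (i : Fin Nt) :
    Matrix (Fin Nt × Fin Nr) (Fin Nt × Fin Nr) ℂ :=
  let S : Matrix (Fin Nt × Fin Nr) (Fin 1 × Fin Nr) ℂ :=
    (Real.sqrt ρ : ℂ) •
      ((Matrix.of fun k (_ : Fin 1) => U k i) ⊗ₖ (1 : Matrix (Fin Nr) (Fin Nr) ℂ))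
  P - P * S * (Sᴴ * P * S + (σ2 : ℂ) • 1)⁻¹ * Sᴴ * P

/-- The sequence of error covariance matrices produced from `P₁` by a sequence
of operations: at step `k`, `seq k = some i` performs a measurement update with
pilot direction `u_i`, and `seq k = none` performs the prediction update
`P ↦ a²P + (1-a²)P₁`. -/
noncomputable def kalmanSeq {Nt Nr : ℕ} (U : Matrix (Fin Nt) (Fin Nt) ℂ)
    (ρ σ2 a : ℝ) (P1 : Matrix (Fin Nt × Fin Nr) (Fin Nt × Fin Nr) ℂ)
    (seq : ℕ → Option (Fin Nt)) : ℕ → Matrix (Fin Nt × Fin Nr) (Fin Nt × Fin Nr) ℂ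
  | 0 => P1
  | k + 1 =>
    match seq k with
    | some i => measUpdate U ρ σ2 (kalmanSeq U ρ σ2 a P1 seq k) i
    | none => (a ^ 2 : ℝ) • kalmanSeq U ρ σ2 a P1 seq k + (1 - a ^ 2 : ℝ) • P1

lemma real_smul_mat {m n : Type*} (r : ℝ) (M : Matrix m n ℂ) :
    r • M = (r : ℂ) • M := by
  ext i j
  simp [Matrix.smul_apply, Complex.real_smul]

lemma smul_sandwich {n m : Type*} [Fintype n] [Fintype m] [DecidableEq n] (c : ℂ)
    (W : Matrix m n ℂ) (A : Matrix n n ℂ) (Wc : Matrix n m ℂ) :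
    c • (W * A * Wc) = W * (c • A) * Wc := by
  rw [Matrix.mul_smul, Matrix.smul_mul]

lemma kron_conjT {m n p q : ℕ} (A : Matrix (Fin m) (Fin n) ℂ) (B : Matrix (Fin p) (Fin q) ℂ) :
    (A ⊗ₖ B)ᴴ = Aᴴ ⊗ₖ Bᴴ := by
  ext ⟨a, b⟩ ⟨c, e⟩
  simp [conjTranspose_apply, kroneckerMap_apply, mul_comm]

lemma sublemA {Nt Nr : ℕ} (d : Fin Nt × Fin Nr → ℝ) (i : Fin Nt)
    (e : Matrix (Fin Nt) (Fin 1) ℂ) (he : e = Matrix.of fun k _ => if k = i then 1 else 0) :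
    (e ⊗ₖ (1 : Matrix (Fin Nr) (Fin Nr) ℂ))ᴴ * Matrix.diagonal (fun x => (d x : ℂ)) *
      (e ⊗ₖ (1 : Matrix (Fin Nr) (Fin Nr) ℂ)) =
      Matrix.diagonal (fun p : Fin 1 × Fin Nr => (d (i, p.2) : ℂ)) := by
  subst he
  ext ⟨a, r⟩ ⟨b, r'⟩
  simp only [mul_apply, conjTranspose_apply, kroneckerMap_apply, Matrix.of_apply,
    Matrix.one_apply, Matrix.diagonal_apply, Fintype.sum_prod_type, Subsingleton.elim a b,
    Prod.mk.injEq, ite_and, apply_ite (star : ℂ → ℂ), star_one, star_zero, mul_ite, ite_mul,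
    one_mul, mul_one, zero_mul, mul_zero, Finset.sum_ite_eq, Finset.sum_ite_eq',
    Finset.mem_univ, if_true]
  split_ifs <;> simp_all

lemma sublemB {Nt Nr : ℕ} (f : Fin Nr → ℂ) (i : Fin Nt)
    (e : Matrix (Fin Nt) (Fin 1) ℂ) (he : e = Matrix.of fun k _ => if k = i then 1 else 0) :
    (e ⊗ₖ (1 : Matrix (Fin Nr) (Fin Nr) ℂ)) *
      Matrix.diagonal (fun p : Fin 1 × Fin Nr => f p.2) *
      (e ⊗ₖ (1 : Matrix (Fin Nr) (Fin Nr) ℂ))ᴴ =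
      Matrix.diagonal (fun x : Fin Nt × Fin Nr => if x.1 = i then f x.2 else 0) := by
  subst he
  ext ⟨j, r⟩ ⟨j', r'⟩
  simp only [mul_apply, conjTranspose_apply, kroneckerMap_apply, Matrix.of_apply,
    Matrix.one_apply, Matrix.diagonal_apply, Fintype.sum_prod_type,
    Prod.mk.injEq, ite_and, apply_ite (star : ℂ → ℂ), star_one, star_zero, mul_ite, ite_mul,
    one_mul, mul_one, zero_mul, mul_zero, Finset.sum_ite_eq, Finset.sum_ite_eq',
    Finset.mem_univ, if_true]
  split_ifs <;> simp_all

lemma alg_helper (a r s : ℂ) (h0 : r * a + s ≠ 0) :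
    a - a * (r * (r * a + s)⁻¹) * a = a * s / (r * a + s) := by
  have h0' : a * r + s ≠ 0 := by rwa [mul_comm]
  field_simp
  ring

lemma measUpdate_diag {Nt Nr : ℕ}
    (U : Matrix (Fin Nt) (Fin Nt) ℂ) (V : Matrix (Fin Nr) (Fin Nr) ℂ)
    (hU : Uᴴ * U = 1 ∧ U * Uᴴ = 1) (hV : Vᴴ * V = 1 ∧ V * Vᴴ = 1)
    (ρ σ2 : ℝ) (hρ : 0 < ρ) (hσ : 0 < σ2)
    (d : Fin Nt × Fin Nr → ℝ) (hd : ∀ x, 0 ≤ d x) (i : Fin Nt) :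
    measUpdate U ρ σ2
        ((U ⊗ₖ V) * Matrix.diagonal (fun x => (d x : ℂ)) * (U ⊗ₖ V)ᴴ) i =
      (U ⊗ₖ V) *
        Matrix.diagonal (fun x =>
          ((if x.1 = i then d x * σ2 / (ρ * d x + σ2) else d x : ℝ) : ℂ)) *
        (U ⊗ₖ V)ᴴ := by
  set W : Matrix (Fin Nt × Fin Nr) (Fin Nt × Fin Nr) ℂ := U ⊗ₖ V with hWdef
  set D : Matrix (Fin Nt × Fin Nr) (Fin Nt × Fin Nr) ℂ :=
    Matrix.diagonal (fun x => (d x : ℂ)) with hDdef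
  have hWc : Wᴴ = Uᴴ ⊗ₖ Vᴴ := kron_conjT U V
  have hW1 : Wᴴ * W = 1 := by
    rw [hWc, hWdef, ← mul_kronecker_mul, hU.1, hV.1, one_kronecker_one]
  have hW2 : W * Wᴴ = 1 := by
    rw [hWc, hWdef, ← mul_kronecker_mul, hU.2, hV.2, one_kronecker_one]
  set C : Matrix (Fin 1 × Fin Nr) (Fin 1 × Fin Nr) ℂ :=
    (1 : Matrix (Fin 1) (Fin 1) ℂ) ⊗ₖ V with hCdef
  have hCc : Cᴴ = (1 : Matrix (Fin 1) (Fin 1) ℂ) ⊗ₖ Vᴴ := by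
    rw [hCdef, kron_conjT, conjTranspose_one]
  have hC1 : Cᴴ * C = 1 := by
    rw [hCc, hCdef, ← mul_kronecker_mul, one_mul, hV.1, one_kronecker_one]
  have hC2 : C * Cᴴ = 1 := by
    rw [hCc, hCdef, ← mul_kronecker_mul, one_mul, hV.2, one_kronecker_one]
  set e : Matrix (Fin Nt) (Fin 1) ℂ :=
    Matrix.of fun k _ => if k = i then 1 else 0 with hedef
  set E : Matrix (Fin Nt × Fin Nr) (Fin 1 × Fin Nr) ℂ :=
    e ⊗ₖ (1 : Matrix (Fin Nr) (Fin Nr) ℂ) with hEdef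
  have hEV : e ⊗ₖ Vᴴ = E * Cᴴ := by
    rw [hCc, hEdef, ← mul_kronecker_mul, Matrix.mul_one, Matrix.one_mul]
  have hUe : U * e = Matrix.of fun k (_ : Fin 1) => U k i := by
    ext k j
    simp [hedef, mul_apply, mul_ite]
  -- the pilot matrix
  set T : Matrix (Fin Nt × Fin Nr) (Fin 1 × Fin Nr) ℂ :=
    (Real.sqrt ρ : ℂ) • (e ⊗ₖ Vᴴ) with hTdef
  set S : Matrix (Fin Nt × Fin Nr) (Fin 1 × Fin Nr) ℂ :=
    (Real.sqrt ρ : ℂ) •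
      ((Matrix.of fun k (_ : Fin 1) => U k i) ⊗ₖ (1 : Matrix (Fin Nr) (Fin Nr) ℂ))
    with hSdef
  have hS : S = W * T := by
    rw [hSdef, hTdef, Matrix.mul_smul, hWdef, ← mul_kronecker_mul, hV.2, hUe]
  have hrr : (Real.sqrt ρ : ℂ) * (Real.sqrt ρ : ℂ) = (ρ : ℂ) := by
    rw [← Complex.ofReal_mul, Real.mul_self_sqrt hρ.le]
  set P : Matrix (Fin Nt × Fin Nr) (Fin Nt × Fin Nr) ℂ := W * D * Wᴴ with hPdef
  have hPS : P * S = W * (D * T) := by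
    rw [hS, hPdef]
    calc W * D * Wᴴ * (W * T) = W * D * (Wᴴ * W) * T := by
          simp only [Matrix.mul_assoc]
      _ = W * (D * T) := by rw [hW1, Matrix.mul_one, Matrix.mul_assoc]
  have hSP : Sᴴ * P = Tᴴ * D * Wᴴ := by
    rw [hS, conjTranspose_mul, hPdef]
    calc Tᴴ * Wᴴ * (W * D * Wᴴ) = Tᴴ * (Wᴴ * W) * (D * Wᴴ) := by
          simp only [Matrix.mul_assoc]
      _ = Tᴴ * D * Wᴴ := by rw [hW1, Matrix.mul_one, Matrix.mul_assoc]
  set Δ : Matrix (Fin 1 × Fin Nr) (Fin 1 × Fin Nr) ℂ :=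
    Matrix.diagonal (fun p : Fin 1 × Fin Nr => ((ρ * d (i, p.2) + σ2 : ℝ) : ℂ)) with hΔdef
  set Δ' : Matrix (Fin 1 × Fin Nr) (Fin 1 × Fin Nr) ℂ :=
    Matrix.diagonal (fun p : Fin 1 × Fin Nr => (((ρ * d (i, p.2) + σ2 : ℝ) : ℂ))⁻¹) with hΔ'def
  have hTc : Tᴴ = (Real.sqrt ρ : ℂ) • (C * Eᴴ) := by
    rw [hTdef, conjTranspose_smul, hEV, conjTranspose_mul, conjTranspose_conjTranspose]
    norm_num
  have hTDT : Tᴴ * D * T = C * ((ρ : ℂ) • (Eᴴ * D * E)) * Cᴴ := by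
    rw [hTc, hTdef, hEV]
    simp only [Matrix.smul_mul, Matrix.mul_smul, smul_smul, hrr]
    simp only [Matrix.mul_assoc]
  have hEDE : Eᴴ * D * E = Matrix.diagonal (fun p : Fin 1 × Fin Nr => (d (i, p.2) : ℂ)) :=
    sublemA d i e hedef
  have hM : Sᴴ * P * S + (σ2 : ℂ) • 1 = C * Δ * Cᴴ := by
    have h1 : Sᴴ * P * S = Tᴴ * D * T := by
      rw [hSP, hS]
      calc Tᴴ * D * Wᴴ * (W * T) = Tᴴ * D * (Wᴴ * W) * T := by
            simp only [Matrix.mul_assoc]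
        _ = Tᴴ * D * T := by rw [hW1, Matrix.mul_one]
    have h2 : (σ2 : ℂ) • (1 : Matrix (Fin 1 × Fin Nr) (Fin 1 × Fin Nr) ℂ) =
        C * ((σ2 : ℂ) • 1) * Cᴴ := by
      rw [Matrix.mul_smul, Matrix.mul_one, Matrix.smul_mul, hC2]
    rw [h1, hTDT, hEDE, h2, ← Matrix.add_mul, ← Matrix.mul_add]
    congr 2
    rw [hΔdef, ← diagonal_smul, ← diagonal_one (n := Fin 1 × Fin Nr) (α := ℂ),
      ← diagonal_smul, diagonal_add]
    refine congrArg Matrix.diagonal (funext fun p => ?_)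
    simp only [Pi.smul_apply, smul_eq_mul, mul_one]
    push_cast
    ring
  have hpos : ∀ p : Fin 1 × Fin Nr, ((ρ * d (i, p.2) + σ2 : ℝ) : ℂ) ≠ 0 := fun p =>
    Complex.ofReal_ne_zero.mpr (by have := hd (i, p.2); positivity)
  have hΔΔ' : Δ * Δ' = 1 := by
    rw [hΔdef, hΔ'def, diagonal_mul_diagonal]
    rw [show (fun p : Fin 1 × Fin Nr =>
        ((ρ * d (i, p.2) + σ2 : ℝ) : ℂ) * (((ρ * d (i, p.2) + σ2 : ℝ) : ℂ))⁻¹) =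
        fun _ => (1 : ℂ) from funext fun p => mul_inv_cancel₀ (hpos p), diagonal_one]
  have hMinv : (Sᴴ * P * S + (σ2 : ℂ) • 1)⁻¹ = C * Δ' * Cᴴ := by
    apply Matrix.inv_eq_right_inv
    rw [hM]
    calc C * Δ * Cᴴ * (C * Δ' * Cᴴ) = C * (Δ * (Cᴴ * C) * Δ') * Cᴴ := by
          simp only [Matrix.mul_assoc]
      _ = 1 := by rw [hC1, Matrix.mul_one, hΔΔ', Matrix.mul_one, hC2]
  -- the gain matrix
  set G : Matrix (Fin Nt × Fin Nr) (Fin Nt × Fin Nr) ℂ :=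
    Matrix.diagonal (fun x : Fin Nt × Fin Nr =>
      if x.1 = i then (ρ : ℂ) * (((ρ * d (i, x.2) + σ2 : ℝ) : ℂ))⁻¹ else 0) with hGdef
  have hTC : T * C = (Real.sqrt ρ : ℂ) • E := by
    rw [hTdef, hEV, Matrix.smul_mul, Matrix.mul_assoc, hC1, Matrix.mul_one]
  have hCT : Cᴴ * Tᴴ = (Real.sqrt ρ : ℂ) • Eᴴ := by
    rw [← conjTranspose_mul, hTC, conjTranspose_smul]
    norm_num
  have hTMT : T * (C * Δ' * Cᴴ) * Tᴴ = G := by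
    calc T * (C * Δ' * Cᴴ) * Tᴴ = (T * C) * Δ' * (Cᴴ * Tᴴ) := by
          simp only [Matrix.mul_assoc]
      _ = (ρ : ℂ) • (E * Δ' * Eᴴ) := by
          rw [hTC, hCT]
          simp only [Matrix.smul_mul, Matrix.mul_smul, smul_smul, hrr]
      _ = G := by
          rw [hΔ'def,
            sublemB (fun r => (((ρ * d (i, r) + σ2 : ℝ) : ℂ))⁻¹) i e hedef,
            hGdef, ← diagonal_smul]
          refine congrArg Matrix.diagonal (funext fun x => ?_)
          by_cases h : x.1 = i <;> simp [h]
  have key : P * S * (Sᴴ * P * S + (σ2 : ℂ) • 1)⁻¹ * Sᴴ * P = W * (D * G * D) * Wᴴ := by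
    have hgrp : P * S * (Sᴴ * P * S + (σ2 : ℂ) • 1)⁻¹ * Sᴴ * P =
        (P * S) * (Sᴴ * P * S + (σ2 : ℂ) • 1)⁻¹ * (Sᴴ * P) := by
      simp only [Matrix.mul_assoc]
    rw [hgrp, hMinv, hPS, hSP, ← hTMT]
    simp only [Matrix.mul_assoc]
  have hfinal : D - D * G * D =
      Matrix.diagonal (fun x =>
        ((if x.1 = i then d x * σ2 / (ρ * d x + σ2) else d x : ℝ) : ℂ)) := by
    rw [hDdef, hGdef, diagonal_mul_diagonal, diagonal_mul_diagonal, diagonal_sub]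
    refine congrArg Matrix.diagonal (funext fun x => ?_)
    obtain ⟨j, r⟩ := x
    by_cases h : j = i
    · subst h
      simp only [if_pos rfl]
      have h0 : ((ρ * d (j, r) + σ2 : ℝ) : ℂ) ≠ 0 :=
        Complex.ofReal_ne_zero.mpr (by have := hd (j, r); positivity)
      push_cast at h0 ⊢
      exact alg_helper ((d (j, r) : ℂ)) (ρ : ℂ) (σ2 : ℂ) h0
    · simp [h]
  show P - P * S * (Sᴴ * P * S + (σ2 : ℂ) • 1)⁻¹ * Sᴴ * P = _
  rw [key, hPdef, ← Matrix.sub_mul, ← Matrix.mul_sub, hfinal]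

/-- Proposition 2: every iterate produced by any sequence of
measurement updates (with pilot directions taken from the columns of `U`) and
prediction updates is of the form `(U⊗V) D (U⊗V)ᴴ` with `D` nonnegative
diagonal, i.e. all iterates are simultaneously diagonalizable with `P₁`. -/
theorem stmt8 {Nt Nr : ℕ}
    (U : Matrix (Fin Nt) (Fin Nt) ℂ) (V : Matrix (Fin Nr) (Fin Nr) ℂ)
    (hU : Uᴴ * U = 1 ∧ U * Uᴴ = 1) (hV : Vᴴ * V = 1 ∧ V * Vᴴ = 1)
    (l : Fin Nt × Fin Nr → ℝ) (hl : ∀ x, 0 ≤ l x)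
    (P1 : Matrix (Fin Nt × Fin Nr) (Fin Nt × Fin Nr) ℂ)
    (hP1 : P1 = (U ⊗ₖ V) * Matrix.diagonal (fun x => (l x : ℂ)) * (U ⊗ₖ V)ᴴ)
    (a ρ σ2 : ℝ) (ha : 0 < a) (ha1 : a ≤ 1) (hρ : 0 < ρ) (hσ : 0 < σ2)
    (seq : ℕ → Option (Fin Nt)) :
    ∀ k : ℕ, ∃ d : Fin Nt × Fin Nr → ℝ, (∀ x, 0 ≤ d x) ∧
      kalmanSeq U ρ σ2 a P1 seq k =
        (U ⊗ₖ V) * Matrix.diagonal (fun x => (d x : ℂ)) * (U ⊗ₖ V)ᴴ := by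
  intro k
  induction k with
  | zero =>
    exact ⟨l, hl, hP1⟩
  | succ k ih =>
    obtain ⟨d, hd, hk⟩ := ih
    show (∃ d', _)
    rw [kalmanSeq]
    cases hsk : seq k with
    | some i =>
      refine ⟨fun x => if x.1 = i then d x * σ2 / (ρ * d x + σ2) else d x, fun x => ?_, ?_⟩
      · by_cases h : x.1 = i
        · simp only [h, if_pos]
          have := hd x
          positivity
        · simp only [h, if_neg, not_false_iff]
          exact hd x
      · rw [hk]
        exact measUpdate_diag U V hU hV ρ σ2 hρ hσ d hd i
    | none =>
      refine ⟨fun x => a ^ 2 * d x + (1 - a ^ 2) * l x, fun x => ?_, ?_⟩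
      · have h1 : (0:ℝ) ≤ a ^ 2 := sq_nonneg a
        have h2 : a ^ 2 ≤ 1 := by nlinarith
        exact add_nonneg (mul_nonneg h1 (hd x)) (mul_nonneg (by linarith) (hl x))
      · have hdiag : Matrix.diagonal
            (fun x => ((a ^ 2 * d x + (1 - a ^ 2) * l x : ℝ) : ℂ)) =
            ((a ^ 2 : ℝ) : ℂ) • Matrix.diagonal (fun x => (d x : ℂ)) +
              ((1 - a ^ 2 : ℝ) : ℂ) • Matrix.diagonal (fun x => (l x : ℂ)) := by
          ext p q
          by_cases h : p = q
          · subst h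
            simp only [Matrix.add_apply, Matrix.smul_apply, Matrix.diagonal_apply_eq,
              smul_eq_mul]
            push_cast
            ring
          · simp [Matrix.diagonal_apply_ne _ h, h]
        rw [hk, hP1, real_smul_mat, real_smul_mat, smul_sandwich, smul_sandwich,
          ← Matrix.add_mul, ← Matrix.mul_add, hdiag]
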